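/- Let A_0 = {a_0(1),…,a_0(d)} ⊆ A be arms such that λ_min(Σ_{i=1}^d x_{a_0(i)} x_{a_0(i)}^T) > 0, let (b_t)_{t≥1} be an arbitrary sequence of arms, let c_{A_0} = λ_min(Σ_{i=1}^d x_{a_0(i)} x_{a_0(i)}^T)/√d and f(t) = c_{A_0} √t. Define the sampling rule recursively by i_0 = 1 and, for t ≥ 0, a_{t+1} = a_0(i_t) if λ_min(Σ_{s=1}^t x_{a_s} x_{a_s}^T) < f(t) and a_{t+1} = b_t otherwise, with i_{t+1} = (i_t mod d) + 1{λ_min(Σ_{s=1}^t x_{a_s} x_{a_s}^T) < f(t)}. Then for all t ≥ 5d/4 + 1/(4d) + 3/2 one has λ_min(Σ_{s=1}^t x_{a_s} x_{a_s}^T) ≥ f(t − d − 1). -/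

import Mathlib

open Matrix Finset

/-- The smallest eigenvalue of a symmetric matrix, via the Rayleigh-quotient
characterization: `λ_min(M) = inf {vᵀMv : ‖v‖ = 1}`. -/
noncomputable def lambdaMin {n : ℕ} (M : Matrix (Fin n) (Fin n) ℝ) : ℝ :=
  sInf {r : ℝ | ∃ v : Fin n → ℝ, v ⬝ᵥ v = 1 ∧ r = v ⬝ᵥ M.mulVec v}

namespace Stmt10Aux

lemma unit_exists {n : ℕ} (hn : 0 < n) : ∃ v : Fin n → ℝ, v ⬝ᵥ v = 1 := by
  refine ⟨Pi.single ⟨0, hn⟩ 1, ?_⟩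
  simp [dotProduct, Pi.single_apply]

lemma rayleigh_nonempty {n : ℕ} (hn : 0 < n) (M : Matrix (Fin n) (Fin n) ℝ) :
    {r : ℝ | ∃ v : Fin n → ℝ, v ⬝ᵥ v = 1 ∧ r = v ⬝ᵥ M.mulVec v}.Nonempty := by
  obtain ⟨v, hv⟩ := unit_exists hn
  exact ⟨_, v, hv, rfl⟩

lemma abs_le_one_of_unit {n : ℕ} {v : Fin n → ℝ} (hv : v ⬝ᵥ v = 1) (j : Fin n) :
    |v j| ≤ 1 := by
  have h1 : v j * v j ≤ 1 := by
    rw [← hv]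
    exact Finset.single_le_sum (fun i _ => mul_self_nonneg (v i)) (Finset.mem_univ j)
  nlinarith [abs_nonneg (v j), abs_mul_abs_self (v j)]

lemma rayleigh_bddBelow {n : ℕ} (M : Matrix (Fin n) (Fin n) ℝ) :
    BddBelow {r : ℝ | ∃ v : Fin n → ℝ, v ⬝ᵥ v = 1 ∧ r = v ⬝ᵥ M.mulVec v} := by
  refine ⟨-∑ j, ∑ k, |M j k|, ?_⟩
  rintro r ⟨v, hv, rfl⟩
  have habs : |v ⬝ᵥ M.mulVec v| ≤ ∑ j, ∑ k, |M j k| := by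
    calc |v ⬝ᵥ M.mulVec v| ≤ ∑ j, |v j * (M.mulVec v j)| :=
          Finset.abs_sum_le_sum_abs _ _
    _ ≤ ∑ j, ∑ k, |M j k| := by
        refine Finset.sum_le_sum fun j _ => ?_
        rw [abs_mul]
        calc |v j| * |M.mulVec v j| ≤ 1 * ∑ k, |M j k * v k| := by
              have := Finset.abs_sum_le_sum_abs (fun k => M j k * v k) Finset.univ
              exact mul_le_mul (abs_le_one_of_unit hv j) this (abs_nonneg _) zero_le_one
        _ = ∑ k, |M j k| * |v k| := by rw [one_mul]; simp [abs_mul]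
        _ ≤ ∑ k, |M j k| * 1 :=
            Finset.sum_le_sum fun k _ =>
              mul_le_mul_of_nonneg_left (abs_le_one_of_unit hv k) (abs_nonneg _)
        _ = ∑ k, |M j k| := by simp
  linarith [neg_abs_le (v ⬝ᵥ M.mulVec v)]

lemma lambdaMin_le_rayleigh {n : ℕ} (M : Matrix (Fin n) (Fin n) ℝ) {v : Fin n → ℝ}
    (hv : v ⬝ᵥ v = 1) : lambdaMin M ≤ v ⬝ᵥ M.mulVec v :=
  csInf_le (rayleigh_bddBelow M) ⟨v, hv, rfl⟩

lemma le_lambdaMin {n : ℕ} (hn : 0 < n) (M : Matrix (Fin n) (Fin n) ℝ) {c : ℝ}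
    (h : ∀ v : Fin n → ℝ, v ⬝ᵥ v = 1 → c ≤ v ⬝ᵥ M.mulVec v) : c ≤ lambdaMin M := by
  refine le_csInf (rayleigh_nonempty hn M) ?_
  rintro r ⟨v, hv, rfl⟩
  exact h v hv

lemma lambdaMin_add {n : ℕ} (hn : 0 < n) (M N : Matrix (Fin n) (Fin n) ℝ) :
    lambdaMin M + lambdaMin N ≤ lambdaMin (M + N) := by
  refine le_lambdaMin hn _ fun v hv => ?_
  rw [Matrix.add_mulVec, dotProduct_add]
  exact add_le_add (lambdaMin_le_rayleigh M hv) (lambdaMin_le_rayleigh N hv)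

lemma rayleigh_vecMulVec {n : ℕ} (w v : Fin n → ℝ) :
    v ⬝ᵥ (vecMulVec w w).mulVec v = (w ⬝ᵥ v) ^ 2 := by
  simp only [Matrix.mulVec, Matrix.vecMulVec_apply, dotProduct, sq]
  rw [Finset.sum_mul]
  refine Finset.sum_congr rfl fun j _ => ?_
  rw [Finset.mul_sum, Finset.mul_sum]
  exact Finset.sum_congr rfl fun k _ => by ring

lemma rayleigh_psd_sum {n : ℕ} {ι : Type*} (F : Finset ι)
    (y : ι → Fin n → ℝ) (v : Fin n → ℝ) :
    0 ≤ v ⬝ᵥ (∑ j ∈ F, vecMulVec (y j) (y j)).mulVec v := by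
  induction F using Finset.cons_induction with
  | empty => simp [Matrix.mulVec, dotProduct]
  | cons a s ha ih =>
      rw [Finset.sum_cons, Matrix.add_mulVec, dotProduct_add]
      have h0 : 0 ≤ v ⬝ᵥ (vecMulVec (y a) (y a)).mulVec v := by
        rw [rayleigh_vecMulVec]; positivity
  
      linarith

lemma lambdaMin_psd_sum {n : ℕ} (hn : 0 < n) {ι : Type*} (F : Finset ι)
    (y : ι → Fin n → ℝ) :
    0 ≤ lambdaMin (∑ j ∈ F, vecMulVec (y j) (y j)) :=
  le_lambdaMin hn _ fun v _ => rayleigh_psd_sum F y v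

lemma cycle_sum {d : ℕ} (hd : 0 < d) {β : Type*} [AddCommMonoid β] (g : Fin d → β) (c : ℕ) :
    ∑ k ∈ Finset.range d, g ⟨(c + k) % d, Nat.mod_lt _ hd⟩ = ∑ j, g j := by
  haveI : NeZero d := ⟨hd.ne'⟩
  have h1 : ∑ k ∈ Finset.range d, g ⟨(c + k) % d, Nat.mod_lt _ hd⟩
      = ∑ r : Fin d, g ((⟨c % d, Nat.mod_lt _ hd⟩ : Fin d) + r) := by
    rw [← Fin.sum_univ_eq_sum_range (fun k => g ⟨(c + k) % d, Nat.mod_lt _ hd⟩)]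
    refine Finset.sum_congr rfl fun r _ => ?_
    congr 1
    ext
    simp [Fin.add_def, Nat.mod_add_mod]
  rw [h1]
  exact Fintype.sum_equiv (Equiv.addLeft (⟨c % d, Nat.mod_lt _ hd⟩ : Fin d)) _ _ fun r => rfl

lemma sqrt_add_le' (a b : ℝ) (ha : 0 ≤ a) (hb : 0 ≤ b) :
    Real.sqrt (a + b) ≤ Real.sqrt a + Real.sqrt b := by
  have h : a + b ≤ (Real.sqrt a + Real.sqrt b) ^ 2 := by
    have := Real.sq_sqrt ha
    have := Real.sq_sqrt hb
    nlinarith [Real.sqrt_nonneg a, Real.sqrt_nonneg b]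
  calc Real.sqrt (a + b) ≤ Real.sqrt ((Real.sqrt a + Real.sqrt b) ^ 2) :=
        Real.sqrt_le_sqrt h
  _ = Real.sqrt a + Real.sqrt b := Real.sqrt_sq (by positivity)

lemma main {d K : ℕ} (hd : 0 < d) (x : Fin K → Fin d → ℝ) (a0 : Fin d → Fin K)
    (hA0 : 0 < lambdaMin (∑ i : Fin d, Matrix.vecMulVec (x (a0 i)) (x (a0 i))))
    (a : ℕ → Fin K) (i : ℕ → Fin d) (cA0 : ℝ)
    (hc : cA0 = lambdaMin (∑ i : Fin d, Matrix.vecMulVec (x (a0 i)) (x (a0 i))) / Real.sqrt d)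
    (f : ℕ → ℝ) (hf : ∀ t : ℕ, f t = cA0 * Real.sqrt t)
    (L : ℕ → ℝ)
    (hL : ∀ s : ℕ, L s =
      lambdaMin (∑ s' ∈ Finset.Icc 1 s, Matrix.vecMulVec (x (a s')) (x (a s'))))
    (ha' : ∀ s : ℕ, L s < f s → a (s + 1) = a0 (i s))
    (hi' : ∀ s : ℕ, L s < f s → (i (s + 1) : ℕ) = ((i s : ℕ) + 1) % d) :
    ∀ t : ℕ, f (t - d - 1) ≤ L t := by
  classical
  intro t
  have hsd : (0 : ℝ) < Real.sqrt d := Real.sqrt_pos.mpr (by exact_mod_cast hd)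
  have hcpos : 0 < cA0 := hc ▸ div_pos hA0 hsd
  have hlam0 : lambdaMin (∑ i : Fin d, Matrix.vecMulVec (x (a0 i)) (x (a0 i)))
      = cA0 * Real.sqrt d := by
    rw [hc, div_mul_cancel₀ _ hsd.ne']
  have fmono : ∀ {p q : ℕ}, p ≤ q → f p ≤ f q := by
    intro p q hpq
    rw [hf, hf]
    exact mul_le_mul_of_nonneg_left (Real.sqrt_le_sqrt (by exact_mod_cast hpq)) hcpos.le
  have hIcc : ∀ n : ℕ, Finset.Icc 1 n = Finset.Ioc 0 n := fun n => Finset.Icc_add_one_left_eq_Ioc 0 n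
  have hLmono : ∀ {p q : ℕ}, p ≤ q → L p ≤ L q := by
    intro p q hpq
    rw [hL, hL, hIcc, hIcc,
      ← Finset.sum_Ioc_consecutive (fun s => Matrix.vecMulVec (x (a s)) (x (a s)))
        (Nat.zero_le p) hpq]
    have h1 := lambdaMin_add hd (∑ s ∈ Finset.Ioc 0 p, Matrix.vecMulVec (x (a s)) (x (a s)))
      (∑ s ∈ Finset.Ioc p q, Matrix.vecMulVec (x (a s)) (x (a s)))
    have h2 := lambdaMin_psd_sum hd (Finset.Ioc p q) (fun s => x (a s))
    linarith
  set P : ℕ → Prop := fun s => f s ≤ L s with hPdef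
  have hP0 : P 0 := by
    have h1 : f 0 = 0 := by rw [hf]; simp
    have h2 : (0 : ℝ) ≤ L 0 := by
      rw [hL]
      exact lambdaMin_psd_sum hd _ (fun s => x (a s))
    simp only [hPdef, h1]
    exact h2
  set u := Nat.findGreatest P t with hu
  have hut : u ≤ t := Nat.findGreatest_le t
  have hPu : f u ≤ L u := Nat.findGreatest_spec (Nat.zero_le t) hP0
  have htrig : ∀ s : ℕ, u < s → s ≤ t → L s < f s := by
    intro s h1 h2
    by_contra h
    exact Nat.findGreatest_is_greatest h1 h2 (not_lt.mp h)
  by_cases hcase : u = t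
  · exact le_trans (fmono (by omega : t - d - 1 ≤ t)) (hcase ▸ hPu)
  · have hult : u < t := lt_of_le_of_ne hut hcase
    by_cases hnear : t ≤ u + d + 1
    · have h1 : t - d - 1 ≤ u := by omega
      exact le_trans (fmono h1) (le_trans hPu (hLmono hut))
    · -- far case
      set m := t - u - 1 with hm
      have hmd : d + 1 ≤ m := by omega
      set q := m / d with hq
      have hq1 : 1 ≤ q := (Nat.one_le_div_iff hd).mpr (by omega)
      have hqdm : q * d ≤ m := by
        rw [hq]; exact Nat.div_mul_le_self m d
      have hmqd : m < q * d + d := by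
        have h1 := Nat.div_add_mod m d
        have h2 := Nat.mod_lt m hd
        have h3 : q * d = d * (m / d) := by rw [hq, Nat.mul_comm]
        omega
      set j0 := (i (u + 1) : ℕ) with hj0
      have hA1 : ∀ k : ℕ, k ≤ m - 1 → (i (u + 1 + k) : ℕ) = (j0 + k) % d := by
        intro k
        induction k with
        | zero =>
            intro _
            simpa using (Nat.mod_eq_of_lt (i (u + 1)).isLt).symm
        | succ k ih =>
            intro hk
            have hk' : k ≤ m - 1 := by omega
            have htr : L (u + 1 + k) < f (u + 1 + k) := htrig _ (by omega) (by omega)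
            have h2 := hi' (u + 1 + k) htr
            have h3 : u + 1 + (k + 1) = (u + 1 + k) + 1 := by omega
            rw [h3, h2, ih hk', Nat.mod_add_mod, Nat.add_assoc]
      have hA2 : ∀ k : ℕ, k ≤ m - 1 →
          a (u + 2 + k) = a0 ⟨(j0 + k) % d, Nat.mod_lt _ hd⟩ := by
        intro k hk
        have htr : L (u + 1 + k) < f (u + 1 + k) := htrig _ (by omega) (by omega)
        have h2 := ha' (u + 1 + k) htr
        have h3 : u + 2 + k = (u + 1 + k) + 1 := by omega
        rw [h3, h2]
        congr 1
        exact Fin.ext (hA1 k hk)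
      -- the q-cycle lower bound
      have hcyc : ∀ q' : ℕ, (q' : ℝ) * (cA0 * Real.sqrt d) ≤
          lambdaMin (∑ k ∈ Finset.range (q' * d),
            Matrix.vecMulVec (x (a0 ⟨(j0 + k) % d, Nat.mod_lt _ hd⟩))
              (x (a0 ⟨(j0 + k) % d, Nat.mod_lt _ hd⟩))) := by
        intro q'
        induction q' with
        | zero =>
            simpa using lambdaMin_psd_sum hd (Finset.range (0 * d))
              (fun k => x (a0 ⟨(j0 + k) % d, Nat.mod_lt _ hd⟩))
        | succ q' ih =>
            have hsplit : (q' + 1) * d = q' * d + d := by ring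
            rw [hsplit, Finset.sum_range_add]
            have hcycle : (∑ k ∈ Finset.range d,
                Matrix.vecMulVec (x (a0 ⟨(j0 + (q' * d + k)) % d, Nat.mod_lt _ hd⟩))
                  (x (a0 ⟨(j0 + (q' * d + k)) % d, Nat.mod_lt _ hd⟩)))
                = ∑ j : Fin d, Matrix.vecMulVec (x (a0 j)) (x (a0 j)) := by
              have h4 : ∀ k : ℕ, (j0 + (q' * d + k)) = (j0 + q' * d) + k := fun k => by omega
              calc (∑ k ∈ Finset.range d,
                  Matrix.vecMulVec (x (a0 ⟨(j0 + (q' * d + k)) % d, Nat.mod_lt _ hd⟩))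
                    (x (a0 ⟨(j0 + (q' * d + k)) % d, Nat.mod_lt _ hd⟩)))
                  = ∑ k ∈ Finset.range d,
                    (fun j : Fin d => Matrix.vecMulVec (x (a0 j)) (x (a0 j)))
                      ⟨((j0 + q' * d) + k) % d, Nat.mod_lt _ hd⟩ := by
                    refine Finset.sum_congr rfl fun k _ => ?_
                    rw [h4 k]
              _ = _ := cycle_sum hd (fun j : Fin d => Matrix.vecMulVec (x (a0 j)) (x (a0 j))) (j0 + q' * d)
            rw [hcycle]
            have h5 := lambdaMin_add hd (∑ k ∈ Finset.range (q' * d),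
              Matrix.vecMulVec (x (a0 ⟨(j0 + k) % d, Nat.mod_lt _ hd⟩))
                (x (a0 ⟨(j0 + k) % d, Nat.mod_lt _ hd⟩)))
              (∑ j : Fin d, Matrix.vecMulVec (x (a0 j)) (x (a0 j)))
            push_cast
            rw [hlam0] at h5
            linarith
      -- decompose L t
      have hLt : L u + (q : ℝ) * (cA0 * Real.sqrt d) ≤ L t := by
        have e1 : (∑ s' ∈ Finset.Ioc 0 t, Matrix.vecMulVec (x (a s')) (x (a s')))
            = (∑ s' ∈ Finset.Ioc 0 (u + 1), Matrix.vecMulVec (x (a s')) (x (a s')))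
              + ∑ s' ∈ Finset.Ioc (u + 1) t, Matrix.vecMulVec (x (a s')) (x (a s')) :=
          (Finset.sum_Ioc_consecutive _ (by omega) (by omega)).symm
        have e2 : (∑ s' ∈ Finset.Ioc (u + 1) t, Matrix.vecMulVec (x (a s')) (x (a s')))
            = ∑ k ∈ Finset.range m,
              Matrix.vecMulVec (x (a0 ⟨(j0 + k) % d, Nat.mod_lt _ hd⟩))
                (x (a0 ⟨(j0 + k) % d, Nat.mod_lt _ hd⟩)) := by
          rw [← Finset.Ico_add_one_add_one_eq_Ioc, Finset.sum_Ico_eq_sum_range]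
          have hm' : t + 1 - (u + 1 + 1) = m := by omega
          rw [hm']
          refine Finset.sum_congr rfl fun k hk => ?_
          have hk' : k ≤ m - 1 := by
            have := Finset.mem_range.mp hk; omega
          rw [show u + 1 + 1 + k = u + 2 + k by omega, hA2 k hk']
        have e3 : (∑ k ∈ Finset.range m,
              Matrix.vecMulVec (x (a0 ⟨(j0 + k) % d, Nat.mod_lt _ hd⟩))
                (x (a0 ⟨(j0 + k) % d, Nat.mod_lt _ hd⟩)))
            = (∑ k ∈ Finset.range (q * d),
              Matrix.vecMulVec (x (a0 ⟨(j0 + k) % d, Nat.mod_lt _ hd⟩))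
                (x (a0 ⟨(j0 + k) % d, Nat.mod_lt _ hd⟩)))
              + ∑ k ∈ Finset.Ico (q * d) m,
              Matrix.vecMulVec (x (a0 ⟨(j0 + k) % d, Nat.mod_lt _ hd⟩))
                (x (a0 ⟨(j0 + k) % d, Nat.mod_lt _ hd⟩)) := by
          rw [Finset.range_eq_Ico, Finset.range_eq_Ico]
          exact (Finset.sum_Ico_consecutive _ (Nat.zero_le _) hqdm).symm
        have h6 := lambdaMin_add hd
          (∑ s' ∈ Finset.Ioc 0 (u + 1), Matrix.vecMulVec (x (a s')) (x (a s')))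
          ((∑ k ∈ Finset.range (q * d),
              Matrix.vecMulVec (x (a0 ⟨(j0 + k) % d, Nat.mod_lt _ hd⟩))
                (x (a0 ⟨(j0 + k) % d, Nat.mod_lt _ hd⟩)))
            + ∑ k ∈ Finset.Ico (q * d) m,
              Matrix.vecMulVec (x (a0 ⟨(j0 + k) % d, Nat.mod_lt _ hd⟩))
                (x (a0 ⟨(j0 + k) % d, Nat.mod_lt _ hd⟩)))
        have h7 := lambdaMin_add hd
          (∑ k ∈ Finset.range (q * d),
              Matrix.vecMulVec (x (a0 ⟨(j0 + k) % d, Nat.mod_lt _ hd⟩))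
                (x (a0 ⟨(j0 + k) % d, Nat.mod_lt _ hd⟩)))
          (∑ k ∈ Finset.Ico (q * d) m,
              Matrix.vecMulVec (x (a0 ⟨(j0 + k) % d, Nat.mod_lt _ hd⟩))
                (x (a0 ⟨(j0 + k) % d, Nat.mod_lt _ hd⟩)))
        have h8 := lambdaMin_psd_sum hd (Finset.Ico (q * d) m)
          (fun k => x (a0 ⟨(j0 + k) % d, Nat.mod_lt _ hd⟩))
        have h9 := hcyc q
        have h10 : L (u + 1) = lambdaMin
            (∑ s' ∈ Finset.Ioc 0 (u + 1), Matrix.vecMulVec (x (a s')) (x (a s'))) := by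
          rw [hL, hIcc]
        have h11 : L u ≤ L (u + 1) := hLmono (by omega)
        have h12 : L t = lambdaMin
            ((∑ s' ∈ Finset.Ioc 0 (u + 1), Matrix.vecMulVec (x (a s')) (x (a s')))
              + ((∑ k ∈ Finset.range (q * d),
                  Matrix.vecMulVec (x (a0 ⟨(j0 + k) % d, Nat.mod_lt _ hd⟩))
                    (x (a0 ⟨(j0 + k) % d, Nat.mod_lt _ hd⟩)))
                + ∑ k ∈ Finset.Ico (q * d) m,
                  Matrix.vecMulVec (x (a0 ⟨(j0 + k) % d, Nat.mod_lt _ hd⟩))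
                    (x (a0 ⟨(j0 + k) % d, Nat.mod_lt _ hd⟩)))) := by
          rw [hL, hIcc, e1, e2, e3]
        rw [h12]
        rw [h10] at h11
        linarith
      -- final algebra
      have hnat : t - d - 1 ≤ u + q * q * d := by
        have hqq : q * d ≤ q * (q * d) := Nat.le_mul_of_pos_left (q * d) hq1
        have hqq' : q * (q * d) = q * q * d := by ring
        omega
      have hsq : Real.sqrt ((t - d - 1 : ℕ) : ℝ) ≤ Real.sqrt u + (q : ℝ) * Real.sqrt d := by
        calc Real.sqrt ((t - d - 1 : ℕ) : ℝ) ≤ Real.sqrt ((u : ℝ) + (q : ℝ) * (q : ℝ) * d) := by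
              refine Real.sqrt_le_sqrt ?_
              exact_mod_cast hnat
        _ ≤ Real.sqrt u + Real.sqrt ((q : ℝ) * (q : ℝ) * d) := by
              refine sqrt_add_le' _ _ (by positivity) (by positivity)
        _ = Real.sqrt u + (q : ℝ) * Real.sqrt d := by
              rw [Real.sqrt_mul (by positivity), Real.sqrt_mul_self (by positivity)]
      have hfinal : f (t - d - 1) ≤ f u + (q : ℝ) * (cA0 * Real.sqrt d) := by
        rw [hf, hf]
        calc cA0 * Real.sqrt ((t - d - 1 : ℕ) : ℝ)
            ≤ cA0 * (Real.sqrt u + (q : ℝ) * Real.sqrt d) :=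
              mul_le_mul_of_nonneg_left hsq hcpos.le
        _ = cA0 * Real.sqrt u + (q : ℝ) * (cA0 * Real.sqrt d) := by ring
      linarith

end Stmt10Aux

/-- forced exploration: with an exploration set `A₀ = {a₀(1), …, a₀(d)}` whose
design has positive smallest eigenvalue, `c_{A₀} = λ_min(∑ᵢ x_{a₀(i)} x_{a₀(i)}ᵀ)/√d`,
`f(t) = c_{A₀}√t`, and the sampling rule that plays the next exploration arm `a₀(i_t)`
(cyclically) whenever `λ_min(∑_{s=1}^t x_{a_s} x_{a_s}ᵀ) < f(t)` and otherwise plays `b_t`,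
one has `λ_min(∑_{s=1}^t x_{a_s} x_{a_s}ᵀ) ≥ f(t - d - 1)` for all `t ≥ 5d/4 + 1/(4d) + 3/2`. -/
theorem stmt10 {d K : ℕ} (hd : 0 < d) (x : Fin K → Fin d → ℝ)
    (a0 : Fin d → Fin K)
    (hA0 : 0 < lambdaMin (∑ i : Fin d, Matrix.vecMulVec (x (a0 i)) (x (a0 i))))
    (b : ℕ → Fin K) (a : ℕ → Fin K) (i : ℕ → Fin d)
    (cA0 : ℝ)
    (hc : cA0 = lambdaMin (∑ i : Fin d, Matrix.vecMulVec (x (a0 i)) (x (a0 i))) / Real.sqrt d)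
    (f : ℕ → ℝ) (hf : ∀ t : ℕ, f t = cA0 * Real.sqrt t)
    (hi0 : i 0 = ⟨0, hd⟩)
    (ha : ∀ t : ℕ, a (t + 1) =
      if lambdaMin (∑ s ∈ Finset.Icc 1 t, Matrix.vecMulVec (x (a s)) (x (a s))) < f t then
        a0 (i t)
      else b t)
    (hi : ∀ t : ℕ, i (t + 1) =
      if lambdaMin (∑ s ∈ Finset.Icc 1 t, Matrix.vecMulVec (x (a s)) (x (a s))) < f t then
        ⟨((i t : ℕ) + 1) % d, Nat.mod_lt _ hd⟩
      else i t) :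
    ∀ t : ℕ, (5 * d / 4 + 1 / (4 * d) + 3 / 2 : ℝ) ≤ t →
      f (t - d - 1) ≤
        lambdaMin (∑ s ∈ Finset.Icc 1 t, Matrix.vecMulVec (x (a s)) (x (a s))) := by
  intro t _
  refine Stmt10Aux.main hd x a0 hA0 a i cA0 hc f hf
    (fun s => lambdaMin (∑ s' ∈ Finset.Icc 1 s, Matrix.vecMulVec (x (a s')) (x (a s'))))
    (fun s => rfl) (fun s h => by rw [ha s, if_pos h]) (fun s h => by rw [hi s, if_pos h]) t
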